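/- Let ψ : κ → ℂ* be a nontrivial additive character and χ_1,…,χ_n : μ_d → ℂ* multiplicative characters such that none of χ_1,…,χ_n and the product χ_1⋯χ_n is trivial. Then g(ψ,χ_1)·g(ψ,χ_2)⋯g(ψ,χ_n) = g(ψ, χ_1⋯χ_n)·j(χ_1,…,χ_n). -/

import Mathlib

open scoped BigOperators

noncomputable section

namespace MotivicGJ

variable {κ : Type} [Field κ] [Fintype κ] [DecidableEq κ]

/-- The map `κˣ → μ_d`, `m ↦ m ^ ((q - 1) / d)`, where `q = |κ|`. -/
def toMu (d : ℕ) (hd : d ∣ Fintype.card κ - 1) (m : κˣ) : rootsOfUnity d κ :=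
  ⟨m ^ ((Fintype.card κ - 1) / d), by
    rw [mem_rootsOfUnity, ← pow_mul, Nat.div_mul_cancel hd, ← Fintype.card_units]
    exact pow_card_eq_one⟩

/-- The Gauss sum `g(ψ, χ) = -∑_{m ∈ κˣ} ψ(m) χ(m^((q-1)/d))`. -/
def gSum (d : ℕ) (hd : d ∣ Fintype.card κ - 1) (ψ : AddChar κ ℂ)
    (χ : rootsOfUnity d κ →* ℂˣ) : ℂ :=
  - ∑ m : κˣ, ψ (m : κ) * (χ (toMu d hd m) : ℂ)

/-- The Jacobi sum `j(χ₁, …, χₙ)`. -/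
def jSum (d : ℕ) (hd : d ∣ Fintype.card κ - 1) {n : ℕ}
    (χ : Fin n → (rootsOfUnity d κ →* ℂˣ)) : ℂ :=
  (-1 : ℂ) ^ (n - 1) *
    ∑ m ∈ Finset.univ.filter (fun m : Fin n → κˣ => (∑ i, (m i : κ)) = 1),
      ∏ i, (χ i (toMu d hd (m i)) : ℂ)

/-- The conjugate (inverse) additive character `ψ̄(a) = ψ(-a)`. -/
def conjAddChar (ψ : AddChar κ ℂ) : AddChar κ ℂ where
  toFun a := ψ (-a)
  map_zero_eq_one' := by (try simp only []); rw [neg_zero]; exact ψ.map_zero_eq_one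
  map_add_eq_mul' a b := by (try simp only []); rw [neg_add]; exact ψ.map_add_eq_mul _ _

set_option linter.unusedSectionVars false
set_option linter.unusedVariables false

lemma toMu_mul (d : ℕ) (hd : d ∣ Fintype.card κ - 1) (a b : κˣ) :
    toMu d hd (a * b) = toMu d hd a * toMu d hd b := by
  apply Subtype.ext; simp [toMu, mul_pow]

lemma toMu_surjective (d : ℕ) (hd0 : 0 < d) (hd : d ∣ Fintype.card κ - 1) :
    Function.Surjective (toMu (κ := κ) d hd) := by
  intro ζ
  obtain ⟨g, hg⟩ := IsCyclic.exists_generator (α := κˣ)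
  have horder : orderOf g = Fintype.card κ - 1 := by
    rw [orderOf_eq_card_of_forall_mem_zpowers hg, Nat.card_eq_fintype_card,
      Fintype.card_units]
  obtain ⟨k, hk⟩ := (mem_powers_iff_mem_zpowers).2 (hg (ζ : κˣ))
  simp only [] at hk
  have hζd : ((ζ : κˣ)) ^ d = 1 := ζ.2
  have hdvd : Fintype.card κ - 1 ∣ k * d := by
    rw [← horder]
    apply orderOf_dvd_of_pow_eq_one
    rw [pow_mul, hk, hζd]
  obtain ⟨e, he⟩ : (Fintype.card κ - 1) / d ∣ k := by
    rcases hdvd with ⟨c, hc⟩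
    refine ⟨c, ?_⟩
    have hq : Fintype.card κ - 1 = (Fintype.card κ - 1) / d * d := (Nat.div_mul_cancel hd).symm
    rw [hq] at hc
    have : k * d = ((Fintype.card κ - 1) / d * c) * d := by rw [hc]; ring
    exact Nat.eq_of_mul_eq_mul_right hd0 this
  refine ⟨g ^ e, ?_⟩
  apply Subtype.ext
  show (g ^ e) ^ ((Fintype.card κ - 1) / d) = (ζ : κˣ)
  rw [← pow_mul, ← hk, he]
  ring_nf

lemma addChar_sum {ι : Type*} (ψ : AddChar κ ℂ) (s : Finset ι) (f : ι → κ) :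
    ψ (∑ i ∈ s, f i) = ∏ i ∈ s, ψ (f i) := by
  induction s using Finset.cons_induction with
  | empty => simp
  | cons a s ha ih => rw [Finset.sum_cons, Finset.prod_cons, ψ.map_add_eq_mul, ih]

lemma prodChar_val (d : ℕ) (hd : d ∣ Fintype.card κ - 1) {n : ℕ}
    (χ : Fin n → (rootsOfUnity d κ →* ℂˣ)) (z : rootsOfUnity d κ) :
    (((∏ i, χ i) z : ℂˣ) : ℂ) = ∏ i, ((χ i z : ℂˣ) : ℂ) := by
  rw [MonoidHom.finset_prod_apply]
  exact map_prod (Units.coeHom ℂ) _ _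

/-- If none of `χ₁, …, χₙ` and `χ₁⋯χₙ` is trivial, then
`g(ψ,χ₁)⋯g(ψ,χₙ) = g(ψ, χ₁⋯χₙ) ⬝ j(χ₁,…,χₙ)`. -/
theorem prod_gSum_eq_gSum_mul_jSum (d : ℕ) (hd0 : 0 < d) (hd : d ∣ Fintype.card κ - 1)
    (ψ : AddChar κ ℂ) (hψ : ψ ≠ 1) {n : ℕ} (χ : Fin n → (rootsOfUnity d κ →* ℂˣ))
    (h1 : ∀ i, χ i ≠ 1) (hprod : (∏ i, χ i) ≠ 1) :
    (∏ i, gSum d hd ψ (χ i)) = gSum d hd ψ (∏ i, χ i) * jSum d hd χ := by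
  -- notation
  set F : (Fin n → κˣ) → ℂ := fun m => ∏ i, (χ i (toMu d hd (m i)) : ℂ) with hF
  set S : κ → ℂ := fun s =>
    ∑ m ∈ Finset.univ.filter (fun m : Fin n → κˣ => (∑ i, (m i : κ)) = s), F m with hS
  set c : κˣ → ℂ := fun u => (((∏ i, χ i) (toMu d hd u) : ℂˣ) : ℂ) with hc
  have hn : n ≠ 0 := by
    rintro rfl
    exact hprod (by simp)
  -- scaling of F
  have hFsmul : ∀ (u : κˣ) (m : Fin n → κˣ), F (fun i => u * m i) = c u * F m := by
    intro u m
    show F (fun i => u * m i) = (((∏ i, χ i) (toMu d hd u) : ℂˣ) : ℂ) * F m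
    rw [prodChar_val d hd χ, hF]
    simp only [toMu_mul, map_mul, Units.val_mul]
    rw [← Finset.prod_mul_distrib]
  -- scaling of S
  have hSsmul : ∀ (u : κˣ) (s : κ), S ((u : κ) * s) = c u * S s := by
    intro u s
    rw [hS]
    simp only []
    rw [Finset.mul_sum]
    refine Finset.sum_nbij' (i := fun m => fun i => u⁻¹ * m i)
      (j := fun m => fun i => u * m i) ?_ ?_ ?_ ?_ ?_
    · intro m hm
      simp only [Finset.mem_filter, Finset.mem_univ, true_and] at hm ⊢
      simp only [Units.val_mul, ← Finset.mul_sum, hm, ← mul_assoc]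
      simp
    · intro m hm
      simp only [Finset.mem_filter, Finset.mem_univ, true_and] at hm ⊢
      simp only [Units.val_mul, ← Finset.mul_sum, hm]
    · intro m _; funext i; simp
    · intro m _; funext i; simp
    · intro m hm
      have : (fun i => u * (u⁻¹ * m i)) = m := by funext i; simp
      calc F m = F (fun i => u * (u⁻¹ * m i)) := by rw [this]
        _ = c u * F (fun i => u⁻¹ * m i) := hFsmul u _
  -- S 0 = 0
  have hS0 : S 0 = 0 := by
    obtain ⟨ζ, hζ⟩ : ∃ ζ, (∏ i, χ i) ζ ≠ 1 := by
      by_contra h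
      push_neg at h
      exact hprod (MonoidHom.ext h)
    obtain ⟨u, hu⟩ := toMu_surjective d hd0 hd ζ
    have hcu : c u ≠ 1 := by
      rw [hc]
      simp only [hu]
      intro h
      exact hζ (Units.ext h)
    have h1 : S 0 = c u * S 0 := by
      have := hSsmul u 0
      rwa [mul_zero] at this
    have : (c u - 1) * S 0 = 0 := by rw [sub_mul, one_mul, ← h1, sub_self]
    rcases mul_eq_zero.1 this with h | h
    · exact absurd (by linear_combination h : c u = 1) hcu
    · exact h
  -- S u = c u * S 1
  have hSu : ∀ u : κˣ, S ((u : κ)) = c u * S 1 := by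
    intro u
    have := hSsmul u 1
    rwa [mul_one] at this
  -- Step A : LHS = (-1)^n * ∑ m, ψ(Σ) * F m
  have stepA : (∏ i, gSum d hd ψ (χ i)) =
      (-1 : ℂ) ^ n * ∑ m : Fin n → κˣ, ψ (∑ i, (m i : κ)) * F m := by
    have : ∀ i : Fin n, gSum d hd ψ (χ i) =
        (-1 : ℂ) * ∑ m : κˣ, ψ (m : κ) * (χ i (toMu d hd m) : ℂ) := by
      intro i; rw [gSum, neg_one_mul]
    rw [Finset.prod_congr rfl (fun i _ => this i), Finset.prod_mul_distrib,
      Finset.prod_const, Finset.card_univ, Fintype.card_fin,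
      Fintype.prod_sum (f := fun i (m : κˣ) => ψ (m : κ) * (χ i (toMu d hd m) : ℂ))]
    congr 1
    refine Finset.sum_congr rfl fun m _ => ?_
    rw [Finset.prod_mul_distrib, ← addChar_sum, hF]
  -- fiberwise decomposition
  have stepB : ∑ m : Fin n → κˣ, ψ (∑ i, (m i : κ)) * F m = ∑ s : κ, ψ s * S s := by
    rw [← Finset.sum_fiberwise Finset.univ (fun m : Fin n → κˣ => ∑ i, (m i : κ))
      (fun m => ψ (∑ i, (m i : κ)) * F m)]
    refine Finset.sum_congr rfl fun s _ => ?_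
    rw [hS]
    simp only []
    rw [Finset.mul_sum]
    refine Finset.sum_congr rfl fun m hm => ?_
    simp only [Finset.mem_filter] at hm
    rw [hm.2]
  -- sum over κ = sum over units
  have stepC : ∑ s : κ, ψ s * S s = ∑ u : κˣ, ψ (u : κ) * S (u : κ) := by
    rw [← Finset.add_sum_erase _ _ (Finset.mem_univ (0 : κ)), hS0, mul_zero, zero_add]
    refine Finset.sum_nbij' (i := fun s => if h : s = (0:κ) then 1 else Units.mk0 s h)
      (j := fun u => (u : κ)) ?_ ?_ ?_ ?_ ?_
    · intro s _; exact Finset.mem_univ _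
    · intro u _
      simp only [Finset.mem_erase, Finset.mem_univ, and_true]
      exact u.ne_zero
    · intro s hs
      simp only [Finset.mem_erase] at hs
      rw [dif_neg hs.1]
      simp
    · intro u _
      rw [dif_neg u.ne_zero]
      exact Units.ext (by simp)
    · intro s hs
      simp only [Finset.mem_erase] at hs
      rw [dif_neg hs.1]
      simp
  -- units sum in terms of gSum
  have stepD : ∑ u : κˣ, ψ (u : κ) * S (u : κ) = -(gSum d hd ψ (∏ i, χ i)) * S 1 := by
    rw [gSum, neg_neg, Finset.sum_mul]
    refine Finset.sum_congr rfl fun u _ => ?_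
    rw [hSu u, hc, mul_assoc]
  rw [stepA, stepB, stepC, stepD, jSum]
  obtain ⟨k, rfl⟩ := Nat.exists_eq_succ_of_ne_zero hn
  simp only [Nat.succ_sub_one]
  rw [hS]
  dsimp only
  rw [pow_succ]
  ring
end MotivicGJ
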